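/- Let G = (U, V, E) be a bipartite graph, k a natural number, and D = (U_D, V_D, E_D) a k-defective biclique of G. If |U_D| > k and |V_D| > k, then D is connected, i.e., the graph on vertex set U_D ∪ V_D whose edges are the pairs in E_D is a connected graph. -/

import Mathlib

/-- Membership of a vertex of the sum type in the subgraph `D = (U_D, V_D)`. -/
def inD {α β : Type*} (UD : Finset α) (VD : Finset β) : α ⊕ β → Prop
  | Sum.inl u => u ∈ UD
  | Sum.inr v => v ∈ VD

/-- Adjacency in the induced subgraph `D = (U_D, V_D, E_D)` with `E_D = E ∩ (U_D × V_D)`. -/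
def adjD {α β : Type*} (UD : Finset α) (VD : Finset β) (E : Finset (α × β)) :
    α ⊕ β → α ⊕ β → Prop
  | Sum.inl u, Sum.inr v => u ∈ UD ∧ v ∈ VD ∧ (u, v) ∈ E
  | Sum.inr v, Sum.inl u => u ∈ UD ∧ v ∈ VD ∧ (u, v) ∈ E
  | _, _ => False

lemma commonV {α β : Type*} [DecidableEq α] [DecidableEq β]
    (E : Finset (α × β)) (k : ℕ) (UD : Finset α) (VD : Finset β)
    (hdef : ((UD ×ˢ VD) \ E).card ≤ k) (hV : k < VD.card)
    {u u' : α} (hu : u ∈ UD) (hu' : u' ∈ UD) :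
    ∃ v ∈ VD, (u, v) ∈ E ∧ (u', v) ∈ E := by
  by_contra h
  push_neg at h
  have hsub : VD ⊆ (VD.filter (fun v => (u, v) ∉ E)) ∪ (VD.filter (fun v => (u', v) ∉ E)) := by
    intro v hv
    rcases em ((u, v) ∈ E) with h1 | h1
    · exact Finset.mem_union_right _ (Finset.mem_filter.2 ⟨hv, h v hv h1⟩)
    · exact Finset.mem_union_left _ (Finset.mem_filter.2 ⟨hv, h1⟩)
  have hcard : ((VD.filter (fun v => (u, v) ∉ E)) ∪ (VD.filter (fun v => (u', v) ∉ E))).card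
      ≤ ((UD ×ˢ VD) \ E).card := by
    apply Finset.card_le_card_of_injOn (fun v => (if (u, v) ∈ E then u' else u, v))
    · intro v hv
      simp only [Finset.mem_coe, Finset.mem_union, Finset.mem_filter] at hv
      by_cases h1 : (u, v) ∈ E
      · simp only [if_pos h1]
        have hv' : v ∈ VD ∧ (u', v) ∉ E := by tauto
        exact Finset.mem_sdiff.2 ⟨Finset.mem_product.2 ⟨hu', hv'.1⟩, hv'.2⟩
      · simp only [if_neg h1]
        have hv' : v ∈ VD := by tauto
        exact Finset.mem_sdiff.2 ⟨Finset.mem_product.2 ⟨hu, hv'⟩, h1⟩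
    · intro v _ w _ hvw
      exact congrArg Prod.snd hvw
  have := Finset.card_le_card hsub
  omega

lemma commonU {α β : Type*} [DecidableEq α] [DecidableEq β]
    (E : Finset (α × β)) (k : ℕ) (UD : Finset α) (VD : Finset β)
    (hdef : ((UD ×ˢ VD) \ E).card ≤ k) (hU : k < UD.card)
    {v v' : β} (hv : v ∈ VD) (hv' : v' ∈ VD) :
    ∃ u ∈ UD, (u, v) ∈ E ∧ (u, v') ∈ E := by
  by_contra h
  push_neg at h
  have hsub : UD ⊆ (UD.filter (fun u => (u, v) ∉ E)) ∪ (UD.filter (fun u => (u, v') ∉ E)) := by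
    intro u hu
    rcases em ((u, v) ∈ E) with h1 | h1
    · exact Finset.mem_union_right _ (Finset.mem_filter.2 ⟨hu, h u hu h1⟩)
    · exact Finset.mem_union_left _ (Finset.mem_filter.2 ⟨hu, h1⟩)
  have hcard : ((UD.filter (fun u => (u, v) ∉ E)) ∪ (UD.filter (fun u => (u, v') ∉ E))).card
      ≤ ((UD ×ˢ VD) \ E).card := by
    apply Finset.card_le_card_of_injOn (fun u => (u, if (u, v) ∈ E then v' else v))
    · intro u hu
      simp only [Finset.mem_coe, Finset.mem_union, Finset.mem_filter] at hu
      by_cases h1 : (u, v) ∈ E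
      · simp only [if_pos h1]
        have hu' : u ∈ UD ∧ (u, v') ∉ E := by tauto
        exact Finset.mem_sdiff.2 ⟨Finset.mem_product.2 ⟨hu'.1, hv'⟩, hu'.2⟩
      · simp only [if_neg h1]
        have hu' : u ∈ UD := by tauto
        exact Finset.mem_sdiff.2 ⟨Finset.mem_product.2 ⟨hu', hv⟩, h1⟩
    · intro a _ b _ hab
      exact congrArg Prod.fst hab
  have := Finset.card_le_card hsub
  omega

/-- a `k`-defective biclique with both sides larger than `k` is connected. -/
theorem kDefectiveBiclique_connected {α β : Type*} [DecidableEq α] [DecidableEq β]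
    (U : Finset α) (V : Finset β) (E : Finset (α × β)) (hE : E ⊆ U ×ˢ V)
    (k : ℕ) (UD : Finset α) (VD : Finset β) (hUD : UD ⊆ U) (hVD : VD ⊆ V)
    (hdef : ((UD ×ˢ VD) \ E).card ≤ k)
    (hU : k < UD.card) (hV : k < VD.card) :
    ∀ x y : α ⊕ β, inD UD VD x → inD UD VD y →
      Relation.ReflTransGen (adjD UD VD E) x y := by
  -- helper: path between lefts
  have stepUU : ∀ {u u' : α}, u ∈ UD → u' ∈ UD →
      Relation.ReflTransGen (adjD UD VD E) (Sum.inl u) (Sum.inl u') := by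
    intro u u' hu hu'
    obtain ⟨v, hv, he1, he2⟩ := commonV E k UD VD hdef hV hu hu'
    exact Relation.ReflTransGen.head (show adjD UD VD E (Sum.inl u) (Sum.inr v) from ⟨hu, hv, he1⟩)
      (Relation.ReflTransGen.single (show adjD UD VD E (Sum.inr v) (Sum.inl u') from ⟨hu', hv, he2⟩))
  have stepVV : ∀ {v v' : β}, v ∈ VD → v' ∈ VD →
      Relation.ReflTransGen (adjD UD VD E) (Sum.inr v) (Sum.inr v') := by
    intro v v' hv hv'
    obtain ⟨u, hu, he1, he2⟩ := commonU E k UD VD hdef hU hv hv'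
    exact Relation.ReflTransGen.head (show adjD UD VD E (Sum.inr v) (Sum.inl u) from ⟨hu, hv, he1⟩)
      (Relation.ReflTransGen.single (show adjD UD VD E (Sum.inl u) (Sum.inr v') from ⟨hu, hv', he2⟩))
  have stepUV : ∀ {u : α} {v : β}, u ∈ UD → v ∈ VD →
      Relation.ReflTransGen (adjD UD VD E) (Sum.inl u) (Sum.inr v) := by
    intro u v hu hv
    obtain ⟨v', hv', he1, _⟩ := commonV E k UD VD hdef hV hu hu
    exact Relation.ReflTransGen.head
      (show adjD UD VD E (Sum.inl u) (Sum.inr v') from ⟨hu, hv', he1⟩) (stepVV hv' hv)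
  intro x y hx hy
  match x, y with
  | Sum.inl u, Sum.inl u' => exact stepUU hx hy
  | Sum.inl u, Sum.inr v => exact stepUV hx hy
  | Sum.inr v, Sum.inl u =>
    obtain ⟨v', hv', he1, _⟩ := commonV E k UD VD hdef hV hy hy
    exact (stepVV hx hv').trans
      (Relation.ReflTransGen.single (show adjD UD VD E (Sum.inr v') (Sum.inl u) from ⟨hy, hv', he1⟩))
  | Sum.inr v, Sum.inr v' => exact stepVV hx hy
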